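/- Let U ⊆ ℂ⁴ be open with coordinates (t, s, u, v) such that t³ ≠ s³ on U, and let R : U → ℂ be holomorphic with R(p) ≠ 0 and R(p)² = −1 − (vt − us)/(3(t³ − s³)) for all p ∈ U. Define Ω : U → ℂ by Ω = −2i(t³ − s³)R³. Then Ω satisfies the first heavenly equation (∂²Ω/∂t∂s)(∂²Ω/∂u∂v) − (∂²Ω/∂t∂v)(∂²Ω/∂u∂s) = 1 on U. -/

import Mathlib

open Filter

private lemma implicit_sqrt {f q : ℂ → ℂ} {x d : ℂ}
    (hf : DifferentiableAt ℂ f x) (h0 : f x ≠ 0)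
    (hq : HasDerivAt q d x) (heq : ∀ᶠ y in nhds x, f y ^ 2 = q y) :
    HasDerivAt f (d / (2 * f x)) x := by
  have h2 : HasDerivAt (fun y => f y ^ 2) ((2 : ℕ) * f x ^ 1 * deriv f x) x :=
    hf.hasDerivAt.pow 2
  have hde : deriv (fun y => f y ^ 2) x = d := by
    rw [Filter.EventuallyEq.deriv_eq heq]; exact hq.deriv
  rw [h2.deriv] at hde
  have h3 : deriv f x = d / (2 * f x) := by
    field_simp
    push_cast at hde
    linear_combination hde
  rw [← h3]; exact hf.hasDerivAt


set_option maxHeartbeats 1000000 in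
/-- Let `U ⊆ ℂ⁴` be open with coordinates `(t, s, u, v)` such that
`t³ ≠ s³` on `U`, and let `R` be holomorphic on `U`, nonvanishing, with
`R² = −1 − (vt − us)/(3(t³ − s³))` on `U`. Then `Ω = −2i(t³ − s³)R³` satisfies
Plebański's first heavenly equation `Ω_{ts}Ω_{uv} − Ω_{tv}Ω_{us} = 1` on `U`. -/
theorem stmt_15 (U : Set (ℂ × ℂ × ℂ × ℂ)) (hU : IsOpen U)
    (hts : ∀ p ∈ U, p.1 ^ 3 ≠ p.2.1 ^ 3)
    (R : ℂ × ℂ × ℂ × ℂ → ℂ) (hR : DifferentiableOn ℂ R U)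
    (hR0 : ∀ p ∈ U, R p ≠ 0)
    (hRsq : ∀ p ∈ U, (R p) ^ 2
      = -1 - (p.2.2.2 * p.1 - p.2.2.1 * p.2.1) / (3 * (p.1 ^ 3 - p.2.1 ^ 3)))
    (Ω : ℂ × ℂ × ℂ × ℂ → ℂ)
    (hΩ : ∀ p, Ω p = -2 * Complex.I * (p.1 ^ 3 - p.2.1 ^ 3) * (R p) ^ 3) :
    ∀ t s u v : ℂ, (t, s, u, v) ∈ U →
      (deriv (fun t' => deriv (fun s' => Ω (t', s', u, v)) s) t) *
        (deriv (fun u' => deriv (fun v' => Ω (t, s, u', v')) v) u) -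
      (deriv (fun t' => deriv (fun v' => Ω (t', s, u, v')) v) t) *
        (deriv (fun u' => deriv (fun s' => Ω (t, s', u', v)) s) u) = 1 := by
  -- basic facts at a point of U
  have hDne : ∀ p ∈ U, (3 : ℂ) * (p.1 ^ 3 - p.2.1 ^ 3) ≠ 0 := fun p hp =>
    mul_ne_zero (by norm_num) (sub_ne_zero.mpr (hts p hp))
  have hNrel : ∀ p ∈ U, p.2.2.2 * p.1 - p.2.2.1 * p.2.1
      = (3 * (p.1 ^ 3 - p.2.1 ^ 3)) * (-1 - (R p) ^ 2) := by
    intro p hp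
    have h := hRsq p hp
    have hD := hDne p hp
    have hD' : p.1 ^ 3 - p.2.1 ^ 3 ≠ 0 := sub_ne_zero.mpr (hts p hp)
    field_simp at h
    linear_combination h
  -- partial derivatives of R in the four directions, clean form
  have hRs : ∀ p ∈ U, HasDerivAt (fun s' => R (p.1, s', p.2.2.1, p.2.2.2))
      ((p.2.2.1 + 9 * p.2.1 ^ 2 * (1 + (R p) ^ 2)) /
        (2 * R p * (3 * (p.1 ^ 3 - p.2.1 ^ 3)))) p.2.1 := by
    intro p hp
    obtain ⟨T, S, Uu, V⟩ := p
    simp only at *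
    have hD := hDne (T, S, Uu, V) hp
    simp only at hD
    have hdiff : DifferentiableAt ℂ (fun s' => R (T, s', Uu, V)) S :=
      (hR.differentiableAt (hU.mem_nhds hp)).comp S (by fun_prop)
    have hev : ∀ᶠ s' in nhds S, (R (T, s', Uu, V)) ^ 2
        = -1 - (V * T - Uu * s') / (3 * (T ^ 3 - s' ^ 3)) := by
      have hopen : {s' : ℂ | (T, s', Uu, V) ∈ U} ∈ nhds S :=
        (hU.preimage (f := fun s' : ℂ => ((T, s', Uu, V) : ℂ × ℂ × ℂ × ℂ))
          (by fun_prop)).mem_nhds hp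
      filter_upwards [hopen] with s' hs'
      exact hRsq (T, s', Uu, V) hs'
    have hn : HasDerivAt (fun s' : ℂ => V * T - Uu * s') (-Uu) S := by
      simpa using (((hasDerivAt_id S).const_mul Uu).const_sub (V * T))
    have hd : HasDerivAt (fun s' : ℂ => 3 * (T ^ 3 - s' ^ 3)) (3 * (-(3 * S ^ 2))) S := by
      have := ((hasDerivAt_pow 3 S).const_sub (T ^ 3)).const_mul (3 : ℂ)
      simpa using this
    have hq' : HasDerivAt (fun s' : ℂ => -1 - (V * T - Uu * s') / (3 * (T ^ 3 - s' ^ 3)))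
        (-(((-Uu) * (3 * (T ^ 3 - S ^ 3)) - (V * T - Uu * S) * (3 * (-(3 * S ^ 2)))) /
          (3 * (T ^ 3 - S ^ 3)) ^ 2)) S := (hn.div hd hD).const_sub (-1)
    have hraw := implicit_sqrt hdiff (hR0 (T, S, Uu, V) hp) hq' hev
    have hN := hNrel (T, S, Uu, V) hp
    simp only at hN
    convert hraw using 1
    rw [hN]
    have hr0 := hR0 (T, S, Uu, V) hp
    field_simp
    ring
  have hRt : ∀ p ∈ U, HasDerivAt (fun t' => R (t', p.2.1, p.2.2.1, p.2.2.2))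
      (-(p.2.2.2 + 9 * p.1 ^ 2 * (1 + (R p) ^ 2)) /
        (2 * R p * (3 * (p.1 ^ 3 - p.2.1 ^ 3)))) p.1 := by
    intro p hp
    obtain ⟨T, S, Uu, V⟩ := p
    simp only at *
    have hD := hDne (T, S, Uu, V) hp
    simp only at hD
    have hdiff : DifferentiableAt ℂ (fun t' => R (t', S, Uu, V)) T :=
      (hR.differentiableAt (hU.mem_nhds hp)).comp T (by fun_prop)
    have hev : ∀ᶠ t' in nhds T, (R (t', S, Uu, V)) ^ 2
        = -1 - (V * t' - Uu * S) / (3 * (t' ^ 3 - S ^ 3)) := by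
      have hopen : {t' : ℂ | (t', S, Uu, V) ∈ U} ∈ nhds T :=
        (hU.preimage (f := fun t' : ℂ => ((t', S, Uu, V) : ℂ × ℂ × ℂ × ℂ))
          (by fun_prop)).mem_nhds hp
      filter_upwards [hopen] with t' ht'
      exact hRsq (t', S, Uu, V) ht'
    have hn : HasDerivAt (fun t' : ℂ => V * t' - Uu * S) V T := by
      simpa using (((hasDerivAt_id T).const_mul V).sub_const (Uu * S))
    have hd : HasDerivAt (fun t' : ℂ => 3 * (t' ^ 3 - S ^ 3)) (3 * (3 * T ^ 2)) T := by
      have := ((hasDerivAt_pow 3 T).sub_const (S ^ 3)).const_mul (3 : ℂ)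
      simpa using this
    have hq' : HasDerivAt (fun t' : ℂ => -1 - (V * t' - Uu * S) / (3 * (t' ^ 3 - S ^ 3)))
        (-((V * (3 * (T ^ 3 - S ^ 3)) - (V * T - Uu * S) * (3 * (3 * T ^ 2))) /
          (3 * (T ^ 3 - S ^ 3)) ^ 2)) T := (hn.div hd hD).const_sub (-1)
    have hraw := implicit_sqrt hdiff (hR0 (T, S, Uu, V) hp) hq' hev
    have hN := hNrel (T, S, Uu, V) hp
    simp only at hN
    convert hraw using 1
    rw [hN]
    have hr0 := hR0 (T, S, Uu, V) hp
    field_simp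
    ring
  have hRu : ∀ p ∈ U, HasDerivAt (fun u' => R (p.1, p.2.1, u', p.2.2.2))
      (p.2.1 / (2 * R p * (3 * (p.1 ^ 3 - p.2.1 ^ 3)))) p.2.2.1 := by
    intro p hp
    obtain ⟨T, S, Uu, V⟩ := p
    simp only at *
    have hD := hDne (T, S, Uu, V) hp
    simp only at hD
    have hdiff : DifferentiableAt ℂ (fun u' => R (T, S, u', V)) Uu :=
      (hR.differentiableAt (hU.mem_nhds hp)).comp Uu (by fun_prop)
    have hev : ∀ᶠ u' in nhds Uu, (R (T, S, u', V)) ^ 2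
        = -1 - (V * T - u' * S) / (3 * (T ^ 3 - S ^ 3)) := by
      have hopen : {u' : ℂ | (T, S, u', V) ∈ U} ∈ nhds Uu :=
        (hU.preimage (f := fun u' : ℂ => ((T, S, u', V) : ℂ × ℂ × ℂ × ℂ))
          (by fun_prop)).mem_nhds hp
      filter_upwards [hopen] with u' hu'
      exact hRsq (T, S, u', V) hu'
    have hn : HasDerivAt (fun u' : ℂ => V * T - u' * S) (-S) Uu := by
      simpa using (((hasDerivAt_id Uu).mul_const S).const_sub (V * T))
    have hq' : HasDerivAt (fun u' : ℂ => -1 - (V * T - u' * S) / (3 * (T ^ 3 - S ^ 3)))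
        (-((-S) / (3 * (T ^ 3 - S ^ 3)))) Uu := (hn.div_const _).const_sub (-1)
    have hraw := implicit_sqrt hdiff (hR0 (T, S, Uu, V) hp) hq' hev
    convert hraw using 1
    have hr0 := hR0 (T, S, Uu, V) hp
    field_simp
  have hRv : ∀ p ∈ U, HasDerivAt (fun v' => R (p.1, p.2.1, p.2.2.1, v'))
      (-p.1 / (2 * R p * (3 * (p.1 ^ 3 - p.2.1 ^ 3)))) p.2.2.2 := by
    intro p hp
    obtain ⟨T, S, Uu, V⟩ := p
    simp only at *
    have hD := hDne (T, S, Uu, V) hp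
    simp only at hD
    have hdiff : DifferentiableAt ℂ (fun v' => R (T, S, Uu, v')) V :=
      (hR.differentiableAt (hU.mem_nhds hp)).comp V (by fun_prop)
    have hev : ∀ᶠ v' in nhds V, (R (T, S, Uu, v')) ^ 2
        = -1 - (v' * T - Uu * S) / (3 * (T ^ 3 - S ^ 3)) := by
      have hopen : {v' : ℂ | (T, S, Uu, v') ∈ U} ∈ nhds V :=
        (hU.preimage (f := fun v' : ℂ => ((T, S, Uu, v') : ℂ × ℂ × ℂ × ℂ))
          (by fun_prop)).mem_nhds hp
      filter_upwards [hopen] with v' hv'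
      exact hRsq (T, S, Uu, v') hv'
    have hn : HasDerivAt (fun v' : ℂ => v' * T - Uu * S) T V := by
      simpa using (((hasDerivAt_id V).mul_const T).sub_const (Uu * S))
    have hq' : HasDerivAt (fun v' : ℂ => -1 - (v' * T - Uu * S) / (3 * (T ^ 3 - S ^ 3)))
        (-(T / (3 * (T ^ 3 - S ^ 3)))) V := (hn.div_const _).const_sub (-1)
    have hraw := implicit_sqrt hdiff (hR0 (T, S, Uu, V) hp) hq' hev
    convert hraw using 1
    have hr0 := hR0 (T, S, Uu, V) hp
    field_simp
  -- first derivatives of Ω slices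
  have hΩs : ∀ p ∈ U, deriv (fun s' => Ω (p.1, s', p.2.2.1, p.2.2.2)) p.2.1
      = -Complex.I * (p.2.2.1 * R p + 9 * p.2.1 ^ 2 * R p + 3 * p.2.1 ^ 2 * (R p) ^ 3) := by
    intro p hp
    obtain ⟨T, S, Uu, V⟩ := p
    simp only at *
    have hD := hDne (T, S, Uu, V) hp
    simp only at hD
    have hr0 := hR0 (T, S, Uu, V) hp
    have hD' : T ^ 3 - S ^ 3 ≠ 0 := sub_ne_zero.mpr (hts (T, S, Uu, V) hp)
    have hfun : (fun s' => Ω (T, s', Uu, V))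
        = fun s' => -2 * Complex.I * (T ^ 3 - s' ^ 3) * (R (T, s', Uu, V)) ^ 3 :=
      funext fun s' => hΩ (T, s', Uu, V)
    rw [hfun]
    have hc : HasDerivAt (fun s' : ℂ => -2 * Complex.I * (T ^ 3 - s' ^ 3))
        (-2 * Complex.I * (-(3 * S ^ 2))) S := by
      have := ((hasDerivAt_pow 3 S).const_sub (T ^ 3)).const_mul (-2 * Complex.I)
      simpa using this
    have hb := (hRs (T, S, Uu, V) hp).pow 3
    simp only at hb
    refine ((hc.mul hb).deriv).trans ?_
    push_cast
    simp only [Pi.pow_apply]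
    field_simp
    ring
  have hΩv : ∀ p ∈ U, deriv (fun v' => Ω (p.1, p.2.1, p.2.2.1, v')) p.2.2.2
      = Complex.I * p.1 * R p := by
    intro p hp
    obtain ⟨T, S, Uu, V⟩ := p
    simp only at *
    have hD := hDne (T, S, Uu, V) hp
    simp only at hD
    have hr0 := hR0 (T, S, Uu, V) hp
    have hD' : T ^ 3 - S ^ 3 ≠ 0 := sub_ne_zero.mpr (hts (T, S, Uu, V) hp)
    have hfun : (fun v' => Ω (T, S, Uu, v'))
        = fun v' => -2 * Complex.I * (T ^ 3 - S ^ 3) * (R (T, S, Uu, v')) ^ 3 :=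
      funext fun v' => hΩ (T, S, Uu, v')
    rw [hfun]
    have hb := (hRv (T, S, Uu, V) hp).pow 3
    simp only at hb
    refine ((hb.const_mul (-2 * Complex.I * (T ^ 3 - S ^ 3))).deriv).trans ?_
    push_cast
    field_simp
  -- now the second derivatives at the given point
  intro t s u v hp0
  have hD := hDne (t, s, u, v) hp0
  simp only at hD
  have hr0 := hR0 (t, s, u, v) hp0
  have hD' : t ^ 3 - s ^ 3 ≠ 0 := sub_ne_zero.mpr (hts (t, s, u, v) hp0)
  have hN := hNrel (t, s, u, v) hp0
  simp only at hN
  have hRt0 := hRt (t, s, u, v) hp0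
  have hRu0 := hRu (t, s, u, v) hp0
  simp only at hRt0 hRu0
  set r := R (t, s, u, v) with hr
  set rt := -(v + 9 * t ^ 2 * (1 + r ^ 2)) / (2 * r * (3 * (t ^ 3 - s ^ 3))) with hrt
  set ru := s / (2 * r * (3 * (t ^ 3 - s ^ 3))) with hru
  -- Ω_ts
  have hmem_t : {t' : ℂ | (t', s, u, v) ∈ U} ∈ nhds t :=
    (hU.preimage (f := fun t' : ℂ => ((t', s, u, v) : ℂ × ℂ × ℂ × ℂ))
      (by fun_prop)).mem_nhds hp0
  have hmem_u : {u' : ℂ | (t, s, u', v) ∈ U} ∈ nhds u :=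
    (hU.preimage (f := fun u' : ℂ => ((t, s, u', v) : ℂ × ℂ × ℂ × ℂ))
      (by fun_prop)).mem_nhds hp0
  have h2ts : deriv (fun t' => deriv (fun s' => Ω (t', s', u, v)) s) t
      = -Complex.I * ((u * rt + 9 * s ^ 2 * rt) + 3 * s ^ 2 * (3 * r ^ 2 * rt)) := by
    have hev1 : (fun t' => deriv (fun s' => Ω (t', s', u, v)) s)
        =ᶠ[nhds t] fun t' => -Complex.I * (u * R (t', s, u, v) + 9 * s ^ 2 * R (t', s, u, v)
          + 3 * s ^ 2 * (R (t', s, u, v)) ^ 3) := by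
      filter_upwards [hmem_t] with t' ht'
      exact hΩs (t', s, u, v) ht'
    rw [hev1.deriv_eq]
    have h := (((hRt0.const_mul u).add (hRt0.const_mul (9 * s ^ 2))).add
      ((hRt0.pow 3).const_mul (3 * s ^ 2))).const_mul (-Complex.I)
    refine h.deriv.trans ?_
    push_cast
    ring
  have h2uv : deriv (fun u' => deriv (fun v' => Ω (t, s, u', v')) v) u
      = Complex.I * t * ru := by
    have hev1 : (fun u' => deriv (fun v' => Ω (t, s, u', v')) v)
        =ᶠ[nhds u] fun u' => Complex.I * t * R (t, s, u', v) := by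
      filter_upwards [hmem_u] with u' hu'
      exact hΩv (t, s, u', v) hu'
    rw [hev1.deriv_eq]
    exact (hRu0.const_mul (Complex.I * t)).deriv
  have h2tv : deriv (fun t' => deriv (fun v' => Ω (t', s, u, v')) v) t
      = Complex.I * r + Complex.I * t * rt := by
    have hev1 : (fun t' => deriv (fun v' => Ω (t', s, u, v')) v)
        =ᶠ[nhds t] fun t' => Complex.I * t' * R (t', s, u, v) := by
      filter_upwards [hmem_t] with t' ht'
      exact hΩv (t', s, u, v) ht'
    rw [hev1.deriv_eq]
    have hlin : HasDerivAt (fun t' : ℂ => Complex.I * t') Complex.I t := by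
      simpa using (hasDerivAt_id t).const_mul Complex.I
    refine ((hlin.mul hRt0).deriv).trans ?_
    ring
  have h2us : deriv (fun u' => deriv (fun s' => Ω (t, s', u', v)) s) u
      = -Complex.I * (((1 * r + u * ru) + 9 * s ^ 2 * ru) + 3 * s ^ 2 * (3 * r ^ 2 * ru)) := by
    have hev1 : (fun u' => deriv (fun s' => Ω (t, s', u', v)) s)
        =ᶠ[nhds u] fun u' => -Complex.I * (u' * R (t, s, u', v) + 9 * s ^ 2 * R (t, s, u', v)
          + 3 * s ^ 2 * (R (t, s, u', v)) ^ 3) := by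
      filter_upwards [hmem_u] with u' hu'
      exact hΩs (t, s, u', v) hu'
    rw [hev1.deriv_eq]
    have h := ((((hasDerivAt_id' u).mul hRu0).add (hRu0.const_mul (9 * s ^ 2))).add
      ((hRu0.pow 3).const_mul (3 * s ^ 2))).const_mul (-Complex.I)
    refine h.deriv.trans ?_
    push_cast
    ring
  rw [h2ts, h2uv, h2tv, h2us]
  have hX : (2 * r * (3 * (t ^ 3 - s ^ 3))) ≠ 0 :=
    mul_ne_zero (mul_ne_zero two_ne_zero hr0) hD
  have hrt' : (2 * r * (3 * (t ^ 3 - s ^ 3))) * rt = -(v + 9 * t ^ 2 * (1 + r ^ 2)) := by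
    rw [hrt]; field_simp
  have hru' : (2 * r * (3 * (t ^ 3 - s ^ 3))) * ru = s := by
    rw [hru]; field_simp
  refine mul_right_cancel₀ hX ?_
  linear_combination
    ((-((u + 9 * s ^ 2 + 9 * s ^ 2 * r ^ 2) * t * rt * ru)
      + (r + t * rt) * (r + (u + 9 * s ^ 2 + 9 * s ^ 2 * r ^ 2) * ru))
        * (2 * r * (3 * (t ^ 3 - s ^ 3)))) * Complex.I_sq
    + (-(r * (u + 9 * s ^ 2 + 9 * s ^ 2 * r ^ 2))) * hru'
    + (-(t * r)) * hrt'
    + r * hN
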